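/- arXiv:2603.28423 — 3 statements merged into one kernel-verified Lean document; each statement's English description precedes it below -/
import Mathlib

section
/- Let A, B, C be pairwise disjoint subsets of V. If for every x ∈ 𝒳 the random vectors Y_A and Y_B are conditionally independent given Y_C under the conditional measure μ_x = μ(· | X = x), then under μ the random vectors Y_A and Y_B are conditionally independent given the pair (Y_C, X) (i.e., given the σ-algebra generated jointly by Y_C and X). -/
open MeasureTheory ProbabilityTheory
set_option linter.unusedSectionVars false
set_option maxHeartbeats 1000000

/-- A conditional measure `μ[|s]` is always finite. -/
instance cond_isFiniteMeasure {Ω : Type*} [MeasurableSpace Ω] (μ : Measure Ω) (s : Set Ω) :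
    IsFiniteMeasure (μ[|s]) := by
  constructor
  unfold ProbabilityTheory.cond
  simp only [Measure.smul_apply, smul_eq_mul, Measure.restrict_apply_univ]
  exact lt_of_le_of_lt (ENNReal.inv_mul_le_one _) ENNReal.one_lt_top

/-- The map `ω ↦ (Y a ω)_{a ∈ S}`, i.e. the random vector `Y_S`. -/
def restr {Ω : Type*} {V : Type*} {E : V → Type*} (Y : ∀ a, Ω → E a) (S : Set V) :
    Ω → ∀ a : S, E a := fun ω a => Y a ω

lemma measurable_restr {Ω : Type*} [MeasurableSpace Ω] {V : Type*} {E : V → Type*}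
    [∀ a, MeasurableSpace (E a)] {Y : ∀ a, Ω → E a} (hY : ∀ a, Measurable (Y a)) (S : Set V) :
    Measurable (restr Y S) :=
  measurable_pi_lambda _ fun a => hY a

section Aux

variable {Ω γ 𝒳 : Type*} {mΩ : MeasurableSpace Ω}
  [MeasurableSpace γ] [Fintype 𝒳] [MeasurableSpace 𝒳] [MeasurableSingletonClass 𝒳]

lemma aux_comap_le (Z : Ω → γ) (X : Ω → 𝒳) :
    MeasurableSpace.comap Z inferInstance ≤
      MeasurableSpace.comap (fun ω => (Z ω, X ω)) inferInstance := by
  rintro s ⟨u, hu, rfl⟩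
  exact ⟨u ×ˢ Set.univ, hu.prod MeasurableSet.univ, by ext ω; simp⟩

lemma aux_fiber_mem (Z : Ω → γ) (X : Ω → 𝒳) (x : 𝒳) :
    MeasurableSet[MeasurableSpace.comap (fun ω => (Z ω, X ω)) inferInstance] (X ⁻¹' {x}) :=
  ⟨Set.univ ×ˢ ({x} : Set 𝒳), MeasurableSet.univ.prod (measurableSet_singleton x),
    by ext ω; simp [eq_comm]⟩

lemma aux_restrict_eq (μ : Measure Ω) [IsFiniteMeasure μ] {s : Set Ω} (hs : μ s ≠ 0) :
    μ.restrict s = μ s • μ[|s] := by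
  rw [ProbabilityTheory.cond, smul_smul, ENNReal.mul_inv_cancel hs (measure_ne_top μ s), one_smul]

lemma aux_integrable_cond (μ : Measure Ω) [IsFiniteMeasure μ] {s : Set Ω} (hs : μ s ≠ 0)
    {f : Ω → ℝ} (hf : Integrable f μ) : Integrable f (μ[|s]) := by
  rw [ProbabilityTheory.cond]
  exact (hf.restrict).smul_measure (ENNReal.inv_ne_top.mpr hs)

end Aux

section Key

variable {Ω γ 𝒳 : Type*} {mΩ : MeasurableSpace Ω}
  [MeasurableSpace γ] [Fintype 𝒳] [MeasurableSpace 𝒳] [MeasurableSingletonClass 𝒳]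

/-- The σ-algebra generated by `Z`. -/
abbrev mCof (Z : Ω → γ) : MeasurableSpace Ω := MeasurableSpace.comap Z inferInstance

/-- The σ-algebra generated by the pair `(Z, X)`. -/
abbrev mPairOf (Z : Ω → γ) (X : Ω → 𝒳) : MeasurableSpace Ω :=
  MeasurableSpace.comap (fun ω => (Z ω, X ω)) inferInstance

lemma aux_sum_eval (X : Ω → 𝒳) (F : 𝒳 → Ω → ℝ) (ω : Ω) :
    ∑ x : 𝒳, (X ⁻¹' {x}).indicator (F x) ω = F (X ω) ω := by
  rw [Finset.sum_eq_single (X ω)]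
  · simp
  · intro b _ hb
    exact Set.indicator_of_notMem (by simp [hb.symm]) _
  · intro hmem; exact absurd (Finset.mem_univ _) hmem

lemma condexp_pair_discrete (μ : Measure Ω) [IsFiniteMeasure μ]
    (Z : Ω → γ) (hZ : Measurable Z) (X : Ω → 𝒳) (hX : Measurable X)
    (hXpos : ∀ x, μ (X ⁻¹' {x}) ≠ 0)
    (f : Ω → ℝ) (hf : Integrable f μ) :
    (μ[f | mPairOf Z X])
      =ᵐ[μ] fun ω => ∑ x : 𝒳, (X ⁻¹' {x}).indicator
          ((μ[|X ⁻¹' {x}])[f | mCof Z]) ω := by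
  have hmC : mCof Z ≤ mΩ := hZ.comap_le
  have hmCX : mPairOf Z X ≤ mΩ := (hZ.prodMk hX).comap_le
  set F : 𝒳 → Ω → ℝ := fun x => (μ[|X ⁻¹' {x}])[f | mCof Z] with hF_def
  set g : Ω → ℝ := fun ω => ∑ x : 𝒳, (X ⁻¹' {x}).indicator (F x) ω with hg_def
  have hfib : ∀ x : 𝒳, MeasurableSet (X ⁻¹' {x}) := fun x => hX (measurableSet_singleton x)
  have hrestr : ∀ x : 𝒳, μ.restrict (X ⁻¹' {x}) = μ (X ⁻¹' {x}) • μ[|X ⁻¹' {x}] :=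
    fun x => aux_restrict_eq μ (hXpos x)
  have hint_ind : ∀ x : 𝒳, Integrable ((X ⁻¹' {x}).indicator (F x)) μ := by
    intro x
    rw [integrable_indicator_iff (hfib x), IntegrableOn, hrestr x]
    exact integrable_condExp.smul_measure (measure_ne_top μ _)
  have hg_int : Integrable g μ := integrable_finset_sum _ fun x _ => hint_ind x
  have hg_sm : StronglyMeasurable[mPairOf Z X] g := by
    apply Finset.stronglyMeasurable_fun_sum
    intro x _
    exact (stronglyMeasurable_condExp.mono (aux_comap_le Z X)).indicator (aux_fiber_mem Z X x)
  refine (ae_eq_condExp_of_forall_setIntegral_eq hmCX hf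
    (fun s _ _ => hg_int.integrableOn) (fun S hS _ => ?_)
    (StronglyMeasurable.aestronglyMeasurable hg_sm)).symm
  obtain ⟨T, hT, rfl⟩ := hS
  set P : 𝒳 → Set Ω := fun x => (fun ω => (Z ω, X ω)) ⁻¹' T ∩ X ⁻¹' {x} with hP_def
  have hPmeas : ∀ x : 𝒳, MeasurableSet (P x) := fun x =>
    ((hZ.prodMk hX) hT).inter (hfib x)
  have hPdisj : ((Finset.univ : Finset 𝒳) : Set 𝒳).Pairwise (Function.onFun Disjoint P) := by
    intro x _ y _ hxy
    refine Set.disjoint_left.mpr fun ω hωx hωy => hxy ?_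
    rw [← hωx.2, ← hωy.2]
  have hPunion : (fun ω => (Z ω, X ω)) ⁻¹' T = ⋃ x ∈ (Finset.univ : Finset 𝒳), P x := by
    ext ω; simp [hP_def]
  -- key per-fiber integral identity
  have hkey : ∀ x : 𝒳, ∫ ω in P x, g ω ∂μ = ∫ ω in P x, f ω ∂μ := by
    intro x
    set Tx : Set γ := (fun y => (y, x)) ⁻¹' T with hTx_def
    have hTx : MeasurableSet Tx := measurable_prodMk_right hT
    have hSx : MeasurableSet[mCof Z] (Z ⁻¹' Tx) := ⟨Tx, hTx, rfl⟩
    have hPx : P x = Z ⁻¹' Tx ∩ X ⁻¹' {x} := by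
      ext ω
      constructor
      · rintro ⟨h1, h2⟩
        have hx : X ω = x := h2
        refine ⟨?_, h2⟩
        simpa [hTx_def, hx] using h1
      · rintro ⟨h1, h2⟩
        have hx : X ω = x := h2
        refine ⟨?_, h2⟩
        simpa [hTx_def, hx] using h1
    have hintf : Integrable f (μ[|X ⁻¹' {x}]) := aux_integrable_cond μ (hXpos x) hf
    have hcomp : ∀ φ : Ω → ℝ, ∫ ω in P x, φ ω ∂μ
        = (μ (X ⁻¹' {x})).toReal • ∫ ω in Z ⁻¹' Tx, φ ω ∂(μ[|X ⁻¹' {x}]) := by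
      intro φ
      rw [hPx, ← Measure.restrict_restrict (hmC _ hSx), hrestr x, Measure.restrict_smul,
        integral_smul_measure]
    have hgeq : ∀ ω ∈ P x, g ω = F x ω := by
      intro ω hω
      have hx : X ω = x := hω.2
      rw [hg_def]
      simp only
      rw [aux_sum_eval X F ω, hx]
    rw [setIntegral_congr_fun (hPmeas x) hgeq, hcomp (F x), hcomp f,
      setIntegral_condExp hmC hintf hSx]
  rw [hPunion,
    integral_biUnion_finset _ (fun x _ => hPmeas x) hPdisj
      (fun x _ => hg_int.integrableOn),
    integral_biUnion_finset _ (fun x _ => hPmeas x) hPdisj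
      (fun x _ => hf.integrableOn)]
  exact Finset.sum_congr rfl fun x _ => hkey x

end Key

/-- If `A, B, C` are pairwise disjoint subsets of `V` and, for every `x ∈ 𝒳`,
the random vectors `Y_A` and `Y_B` are conditionally independent given `Y_C` under the
conditional measure `μ_x = μ(·|X = x)`, then under `μ` the vectors `Y_A` and `Y_B` are
conditionally independent given the pair `(Y_C, X)`. -/
theorem profile_condIndep_implies_condIndep_given_YC_X
    {Ω : Type*} [MeasurableSpace Ω] [StandardBorelSpace Ω] [Nonempty Ω]
    {V : Type*} [Fintype V]
    {𝒳 : Type*} [Fintype 𝒳] [Nonempty 𝒳] [MeasurableSpace 𝒳] [MeasurableSingletonClass 𝒳]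
    {E : V → Type*} [∀ a, MeasurableSpace (E a)] [∀ a, StandardBorelSpace (E a)]
    (Y : ∀ a, Ω → E a) (hY : ∀ a, Measurable (Y a))
    (X : Ω → 𝒳) (hX : Measurable X)
    (μ : Measure Ω) [IsProbabilityMeasure μ] (hXpos : ∀ x : 𝒳, μ (X ⁻¹' {x}) ≠ 0)
    (A B C : Set V) (hAB : Disjoint A B) (hAC : Disjoint A C) (hBC : Disjoint B C)
    (h : ∀ x : 𝒳,
      CondIndepFun (MeasurableSpace.comap (restr Y C) MeasurableSpace.pi)
        ((measurable_restr hY C).comap_le) (restr Y A) (restr Y B) (μ[|X ⁻¹' {x}])) :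
    CondIndepFun
      (MeasurableSpace.comap (fun ω => (restr Y C ω, X ω)) inferInstance)
      (((measurable_restr hY C).prodMk hX).comap_le)
      (restr Y A) (restr Y B) μ := by
  have hZ : Measurable (restr Y C) := measurable_restr hY C
  rw [condIndepFun_iff_condExp_inter_preimage_eq_mul (measurable_restr hY A)
    (measurable_restr hY B)]
  intro s t hs ht
  have hDA : MeasurableSet (restr Y A ⁻¹' s) := (measurable_restr hY A) hs
  have hDB : MeasurableSet (restr Y B ⁻¹' t) := (measurable_restr hY B) ht
  set DA := restr Y A ⁻¹' s with hDA_def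
  set DB := restr Y B ⁻¹' t with hDB_def
  set iD : Ω → ℝ := (DA ∩ DB).indicator fun _ => (1 : ℝ) with hiD_def
  set iA : Ω → ℝ := DA.indicator fun _ => (1 : ℝ) with hiA_def
  set iB : Ω → ℝ := DB.indicator fun _ => (1 : ℝ) with hiB_def
  have hiD : Integrable iD μ := (integrable_const (1 : ℝ)).indicator (hDA.inter hDB)
  have hiA : Integrable iA μ := (integrable_const (1 : ℝ)).indicator hDA
  have hiB : Integrable iB μ := (integrable_const (1 : ℝ)).indicator hDB
  set FD : 𝒳 → Ω → ℝ := fun x => (μ[|X ⁻¹' {x}])[iD | mCof (restr Y C)] with hFD_def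
  set FA : 𝒳 → Ω → ℝ := fun x => (μ[|X ⁻¹' {x}])[iA | mCof (restr Y C)] with hFA_def
  set FB : 𝒳 → Ω → ℝ := fun x => (μ[|X ⁻¹' {x}])[iB | mCof (restr Y C)] with hFB_def
  have e1 : (μ[iD | mPairOf (restr Y C) X])
      =ᵐ[μ] fun ω => ∑ x : 𝒳, (X ⁻¹' {x}).indicator (FD x) ω :=
    condexp_pair_discrete μ _ hZ X hX hXpos iD hiD
  have e2 : (μ[iA | mPairOf (restr Y C) X])
      =ᵐ[μ] fun ω => ∑ x : 𝒳, (X ⁻¹' {x}).indicator (FA x) ω :=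
    condexp_pair_discrete μ _ hZ X hX hXpos iA hiA
  have e3 : (μ[iB | mPairOf (restr Y C) X])
      =ᵐ[μ] fun ω => ∑ x : 𝒳, (X ⁻¹' {x}).indicator (FB x) ω :=
    condexp_pair_discrete μ _ hZ X hX hXpos iB hiB
  -- per-fiber conditional independence
  have hH : ∀ x : 𝒳, ∀ᵐ ω ∂(μ[|X ⁻¹' {x}]), FD x ω = FA x ω * FB x ω := by
    intro x
    have := (condIndepFun_iff_condExp_inter_preimage_eq_mul (μ := μ[|X ⁻¹' {x}])
      (measurable_restr hY A) (measurable_restr hY B)).mp (h x) s t hs ht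
    exact this
  have hmC : mCof (restr Y C) ≤ ‹MeasurableSpace Ω› := hZ.comap_le
  have hbad_null : ∀ x : 𝒳, μ ({ω | FD x ω ≠ FA x ω * FB x ω} ∩ X ⁻¹' {x}) = 0 := by
    intro x
    have hmFD : Measurable (FD x) := (stronglyMeasurable_condExp.mono hmC).measurable
    have hmFA : Measurable (FA x) := (stronglyMeasurable_condExp.mono hmC).measurable
    have hmFB : Measurable (FB x) := (stronglyMeasurable_condExp.mono hmC).measurable
    have hbadm : MeasurableSet {ω | FD x ω ≠ FA x ω * FB x ω} :=
      (measurableSet_eq_fun hmFD (hmFA.mul hmFB)).compl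
    rw [← Measure.restrict_apply hbadm, aux_restrict_eq μ (hXpos x), Measure.smul_apply,
      smul_eq_mul]
    have h0 : (μ[|X ⁻¹' {x}]) {ω | FD x ω ≠ FA x ω * FB x ω} = 0 := by
      exact ae_iff.mp (hH x)
    rw [h0, mul_zero]
  have hunion : μ (⋃ x : 𝒳, {ω | FD x ω ≠ FA x ω * FB x ω} ∩ X ⁻¹' {x}) = 0 :=
    measure_iUnion_null hbad_null
  have e4 : (fun ω => ∑ x : 𝒳, (X ⁻¹' {x}).indicator (FD x) ω)
      =ᵐ[μ] fun ω => (∑ x : 𝒳, (X ⁻¹' {x}).indicator (FA x) ω)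
        * (∑ x : 𝒳, (X ⁻¹' {x}).indicator (FB x) ω) := by
    refine (measure_mono_null ?_ hunion : μ _ = 0)
    intro ω hω
    simp only [Set.mem_setOf_eq, Set.mem_compl_iff] at hω ⊢
    rw [Set.mem_iUnion]
    refine ⟨X ω, ?_, rfl⟩
    simp only [Set.mem_setOf_eq]
    intro heq
    apply hω
    rw [aux_sum_eval X FD ω, aux_sum_eval X FA ω, aux_sum_eval X FB ω, heq]
  calc (μ[iD | mPairOf (restr Y C) X])
      =ᵐ[μ] fun ω => ∑ x : 𝒳, (X ⁻¹' {x}).indicator (FD x) ω := e1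
    _ =ᵐ[μ] fun ω => (∑ x : 𝒳, (X ⁻¹' {x}).indicator (FA x) ω)
        * (∑ x : 𝒳, (X ⁻¹' {x}).indicator (FB x) ω) := e4
    _ =ᵐ[μ] fun ω => (μ[iA | mPairOf (restr Y C) X]) ω
        * (μ[iB | mPairOf (restr Y C) X]) ω := e2.symm.mul e3.symm
end

section
/- (Theorem 1) The probability measure μ satisfies the profile global Markov property (U-GMP) with respect to the profile undirected graph L if and only if μ satisfies the profile connected-set Markov property (U-CSMP) with respect to L. -/
open MeasureTheory ProbabilityTheory

/-- `C` separates `A` from `B` in `G`. -/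
def Separates {V : Type*} (G : SimpleGraph V) (A B C : Set V) : Prop :=
  ∀ a ∈ A, ∀ b ∈ B, ∀ p : G.Walk a b, ∃ c ∈ p.support, c ∈ C

/-- Vertex set of a connected component of the subgraph induced on `D`. -/
def componentSet {V : Type*} (G : SimpleGraph V) (D : Set V)
    (c : (G.induce D).ConnectedComponent) : Set V :=
  Subtype.val '' {v : D | (G.induce D).connectedComponentMk v = c}

/-- The graph `U(x)` induced by a profile undirected graph `L`: distinct `a, b` are adjacent
iff `x ∉ L a b`. -/
def inducedGraph {V 𝒳 : Type*} (L : V → V → Set 𝒳) (hL : ∀ a b, L a b = L b a) (x : 𝒳) :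
    SimpleGraph V where
  Adj a b := a ≠ b ∧ x ∉ L a b
  symm := ⟨fun a b ⟨h1, h2⟩ => ⟨h1.symm, by rwa [hL b a]⟩⟩
  loopless := ⟨fun _ h => h.1 rfl⟩

section MarkovProperties

variable {Ω : Type*} [MeasurableSpace Ω] [StandardBorelSpace Ω] [Nonempty Ω]
  {V : Type*} [Fintype V]
  {𝒳 : Type*} [Fintype 𝒳] [Nonempty 𝒳] [MeasurableSpace 𝒳] [MeasurableSingletonClass 𝒳]
  {E : V → Type*} [∀ a, MeasurableSpace (E a)] [∀ a, StandardBorelSpace (E a)]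

/-- Profile undirected Global Markov Property. -/
def UGMP (Y : ∀ a, Ω → E a) (hY : ∀ a, Measurable (Y a)) (X : Ω → 𝒳) (μ : Measure Ω)
    (L : V → V → Set 𝒳) (hL : ∀ a b, L a b = L b a) : Prop :=
  ∀ (x : 𝒳) (A B C : Set V), A.Nonempty → B.Nonempty →
    Disjoint A B → Disjoint A C → Disjoint B C →
    Separates (inducedGraph L hL x) A B C →
    CondIndepFun (MeasurableSpace.comap (restr Y C) MeasurableSpace.pi)
      ((measurable_restr hY C).comap_le) (restr Y A) (restr Y B) (μ[|X ⁻¹' {x}])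

/-- Profile undirected Connected Set Markov Property. -/
def UCSMP (Y : ∀ a, Ω → E a) (hY : ∀ a, Measurable (Y a)) (X : Ω → 𝒳) (μ : Measure Ω)
    (L : V → V → Set 𝒳) (hL : ∀ a b, L a b = L b a) : Prop :=
  ∀ (x : 𝒳) (D : Set V), D.Nonempty → ¬ ((inducedGraph L hL x).induce D).Connected →
    iCondIndepFun (MeasurableSpace.comap (restr Y Dᶜ) MeasurableSpace.pi)
      ((measurable_restr hY Dᶜ).comap_le)
      (m := fun _ => MeasurableSpace.pi)
      (fun c : ((inducedGraph L hL x).induce D).ConnectedComponent =>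
        restr Y (componentSet (inducedGraph L hL x) D c))
      (μ[|X ⁻¹' {x}])

end MarkovProperties

section AuxMeasurable

variable {Ω : Type*} [MeasurableSpace Ω] {V : Type*} {E : V → Type*}
  [∀ a, MeasurableSpace (E a)]

lemma comap_restr_eq (Y : ∀ a, Ω → E a) (S : Set V) :
    MeasurableSpace.comap (restr Y S) MeasurableSpace.pi
      = ⨆ a : S, MeasurableSpace.comap (Y a) inferInstance := by
  have hpi : (MeasurableSpace.pi : MeasurableSpace (∀ a : S, E a))
      = ⨆ a : S, MeasurableSpace.comap (fun f => f a) inferInstance := rfl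
  rw [hpi, MeasurableSpace.comap_iSup]
  exact iSup_congr fun a => MeasurableSpace.comap_comp

lemma comap_restr_mono (Y : ∀ a, Ω → E a) {S T : Set V} (h : S ⊆ T) :
    MeasurableSpace.comap (restr Y S) MeasurableSpace.pi
      ≤ MeasurableSpace.comap (restr Y T) MeasurableSpace.pi := by
  rw [comap_restr_eq, comap_restr_eq]
  exact iSup_le fun a => le_iSup_of_le ⟨a.1, h a.2⟩ le_rfl

lemma comap_single_le (Y : ∀ a, Ω → E a) {S : Set V} {a : V} (ha : a ∈ S) :
    MeasurableSpace.comap (Y a) inferInstance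
      ≤ MeasurableSpace.comap (restr Y S) MeasurableSpace.pi := by
  rw [comap_restr_eq]
  exact le_iSup_of_le ⟨a, ha⟩ le_rfl

end AuxMeasurable

section AuxGraph

variable {W : Type*} {G : SimpleGraph W} {D : Set W}

lemma reachable_of_walk_support {a b : W} (p : G.Walk a b) :
    (∀ w ∈ p.support, w ∈ D) → ∀ (ha : a ∈ D) (hb : b ∈ D),
      (G.induce D).Reachable ⟨a, ha⟩ ⟨b, hb⟩ := by
  induction p with
  | nil => exact fun _ _ _ => SimpleGraph.Reachable.refl _
  | @cons u v w h q ih =>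
    intro hp ha hb
    have hv : v ∈ D := by
      refine hp v ?_
      rw [SimpleGraph.Walk.support_cons]
      exact List.mem_cons_of_mem _ q.start_mem_support
    have hadj : (G.induce D).Adj ⟨u, ha⟩ ⟨v, hv⟩ := h
    refine hadj.reachable.trans (ih (fun w hw => hp w ?_) hv hb)
    rw [SimpleGraph.Walk.support_cons]
    exact List.mem_cons_of_mem _ hw

lemma walk_of_induce_walk {u v : ↥D} (q : (G.induce D).Walk u v) :
    ∃ p : G.Walk ↑u ↑v, ∀ w ∈ p.support, w ∈ D := by
  induction q with
  | nil =>
    refine ⟨SimpleGraph.Walk.nil, fun w hw => ?_⟩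
    rw [SimpleGraph.Walk.support_nil, List.mem_singleton] at hw
    exact hw ▸ Subtype.coe_prop _
  | @cons u v w h q ih =>
    obtain ⟨p, hp⟩ := ih
    have hadj : G.Adj ↑u ↑v := h
    refine ⟨SimpleGraph.Walk.cons hadj p, fun z hz => ?_⟩
    rw [SimpleGraph.Walk.support_cons] at hz
    rcases List.mem_cons.mp hz with rfl | hz
    · exact u.2
    · exact hp z hz

lemma mem_componentSet_iff {v : W} {c : (G.induce D).ConnectedComponent} :
    v ∈ componentSet G D c ↔
      ∃ hv : v ∈ D, (G.induce D).connectedComponentMk ⟨v, hv⟩ = c := by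
  constructor
  · rintro ⟨w, hw, rfl⟩
    exact ⟨w.2, hw⟩
  · rintro ⟨hv, h⟩
    exact ⟨⟨v, hv⟩, h, rfl⟩

lemma componentSet_subset (c : (G.induce D).ConnectedComponent) :
    componentSet G D c ⊆ D := by
  rintro v ⟨w, _, rfl⟩
  exact w.2

end AuxGraph

lemma iCondIndep_congr_cond {Ω : Type*} [mΩ : MeasurableSpace Ω] [StandardBorelSpace Ω]
    {ι : Type*} {m : ι → MeasurableSpace Ω} {m₁ m₂ : MeasurableSpace Ω} (h : m₁ = m₂)
    (h₁ : m₁ ≤ mΩ) (h₂ : m₂ ≤ mΩ) {μ : @MeasureTheory.Measure Ω mΩ}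
    [MeasureTheory.IsFiniteMeasure μ]
    (hind : ProbabilityTheory.iCondIndep m₁ h₁ m μ) :
    ProbabilityTheory.iCondIndep m₂ h₂ m μ := by
  cases h
  exact hind

/-- **Theorem 1.** `μ` satisfies the profile global Markov property (U-GMP)
with respect to the profile undirected graph `L` if and only if it satisfies the profile
connected-set Markov property (U-CSMP) with respect to `L`. -/
theorem UGMP_iff_UCSMP
    {Ω : Type*} [MeasurableSpace Ω] [StandardBorelSpace Ω] [Nonempty Ω]
    {V : Type*} [Fintype V]
    {𝒳 : Type*} [Fintype 𝒳] [Nonempty 𝒳] [MeasurableSpace 𝒳] [MeasurableSingletonClass 𝒳]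
    {E : V → Type*} [∀ a, MeasurableSpace (E a)] [∀ a, StandardBorelSpace (E a)]
    (Y : ∀ a, Ω → E a) (hY : ∀ a, Measurable (Y a))
    (X : Ω → 𝒳) (hX : Measurable X)
    (μ : Measure Ω) [IsProbabilityMeasure μ] (hXpos : ∀ x : 𝒳, μ (X ⁻¹' {x}) ≠ 0)
    (L : V → V → Set 𝒳) (hL : ∀ a b, L a b = L b a) :
    UGMP Y hY X μ L hL ↔ UCSMP Y hY X μ L hL := by
  constructor
  · -- GMP → CSMP
    intro hgmp x D hD hconn
    classical
    set G := inducedGraph L hL x with hGdef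
    set ν := μ[|X ⁻¹' {x}] with hνdef
    haveI : Nonempty ↥D := hD.to_subtype
    obtain ⟨u, v, huv⟩ : ∃ u v : ↥D, ¬ (G.induce D).Reachable u v := by
      by_contra h
      push_neg at h
      exact hconn ⟨fun u v => h u v⟩
    rw [iCondIndepFun_iff_iCondIndep]
    rw [iCondIndep_iff _ _ _ (fun c => (measurable_restr hY _).comap_le)]
    intro s
    induction s using Finset.induction_on with
    | empty =>
      intro f _
      simp only [Finset.notMem_empty, Set.iInter_of_empty, Set.iInter_univ, Finset.prod_empty]
      rw [Set.indicator_univ, condExp_const ((measurable_restr hY _).comap_le)]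
      exact Filter.Eventually.of_forall fun _ => rfl
    | @insert c t hc ih =>
      intro f hf
      -- the component of c is nonempty
      have hKc_ne : (componentSet G D c).Nonempty := by
        obtain ⟨w, hw⟩ := c.exists_rep
        exact ⟨↑w, ⟨w, hw, rfl⟩⟩
      -- the rest of D is nonempty
      have hrest_ne : (D \ componentSet G D c).Nonempty := by
        by_cases hu : (↑u : V) ∈ componentSet G D c
        · refine ⟨↑v, v.2, fun hv => ?_⟩
          obtain ⟨hu1, hu2⟩ := mem_componentSet_iff.mp hu
          obtain ⟨hv1, hv2⟩ := mem_componentSet_iff.mp hv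
          exact huv (SimpleGraph.ConnectedComponent.eq.mp (hu2.trans hv2.symm))
        · exact ⟨↑u, u.2, hu⟩
      have hsep : Separates G (componentSet G D c) (D \ componentSet G D c) Dᶜ := by
        intro a ha b hb p
        by_contra hcon
        push_neg at hcon
        have hsup : ∀ w ∈ p.support, w ∈ D := fun w hw =>
          Set.not_notMem.mp (hcon w hw)
        obtain ⟨ha1, ha2⟩ := mem_componentSet_iff.mp ha
        have hreach := reachable_of_walk_support p hsup ha1 hb.1
        exact hb.2 (mem_componentSet_iff.mpr
          ⟨hb.1, (SimpleGraph.ConnectedComponent.eq.mpr hreach.symm).trans ha2⟩)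
      have hgm := hgmp x (componentSet G D c) (D \ componentSet G D c) Dᶜ hKc_ne hrest_ne
        (Set.disjoint_left.mpr fun v hv1 hv2 => hv2.2 hv1)
        (Set.disjoint_left.mpr fun v hv1 hv2 => hv2 (componentSet_subset c hv1))
        (Set.disjoint_left.mpr fun v hv1 hv2 => hv2 hv1.1)
        hsep
      rw [condIndepFun_iff_condIndep] at hgm
      rw [condIndep_iff _ _ _ _ ((measurable_restr hY _).comap_le)
        ((measurable_restr hY _).comap_le)] at hgm
      have hfc := hf c (Finset.mem_insert_self c t)
      have hsubset : ∀ i ∈ t, componentSet G D i ⊆ D \ componentSet G D c := by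
        intro i hi w hw
        refine ⟨componentSet_subset i hw, fun hw' => ?_⟩
        obtain ⟨h1, h2⟩ := mem_componentSet_iff.mp hw
        obtain ⟨h1', h2'⟩ := mem_componentSet_iff.mp hw'
        exact hc ((h2.symm.trans h2') ▸ hi)
      have hg : MeasurableSet[MeasurableSpace.comap
          (restr Y (D \ componentSet G D c)) MeasurableSpace.pi] (⋂ i ∈ t, f i) := by
        refine MeasurableSet.biInter t.countable_toSet (fun i hi => ?_)
        exact comap_restr_mono Y (hsubset i hi) _ (hf i (Finset.mem_insert_of_mem hi))
      have hprod := hgm (f c) (⋂ i ∈ t, f i) hfc hg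
      have ihh := ih (fun i hi => hf i (Finset.mem_insert_of_mem hi))
      rw [Finset.set_biInter_insert, Finset.prod_insert hc]
      filter_upwards [hprod, ihh] with ω h1 h2
      simp only [Pi.mul_apply, Finset.prod_apply] at h1 h2 ⊢
      rw [h1, h2]
  · -- CSMP → GMP
    intro hcsmp x A B C hA hB hAB hAC hBC hsep
    classical
    set G := inducedGraph L hL x with hGdef
    set ν := μ[|X ⁻¹' {x}] with hνdef
    set Abar : Set V := {v | ∃ a ∈ A, ∃ p : G.Walk a v, ∀ w ∈ p.support, w ∉ C} with hAbar
    have hA_sub : A ⊆ Abar := by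
      intro a ha
      refine ⟨a, ha, SimpleGraph.Walk.nil, fun w hw => ?_⟩
      rw [SimpleGraph.Walk.support_nil, List.mem_singleton] at hw
      exact hw ▸ (Set.disjoint_left.mp hAC ha)
    have hAbar_D : Abar ⊆ Cᶜ := by
      rintro v ⟨a, ha, p, hp⟩
      exact hp v p.end_mem_support
    have hBbar : ∀ b ∈ B, b ∉ Abar := by
      rintro b hb ⟨a, ha, p, hp⟩
      obtain ⟨w, hw, hwC⟩ := hsep a ha b hb p
      exact hp w hw hwC
    have hclosed : ∀ u ∈ Abar, ∀ (v : V) (p : G.Walk u v),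
        (∀ w ∈ p.support, w ∉ C) → v ∈ Abar := by
      rintro u ⟨a, ha, p0, hp0⟩ v p hp
      refine ⟨a, ha, p0.append p, fun w hw => ?_⟩
      rcases (SimpleGraph.Walk.mem_support_append_iff p0 p).mp hw with h | h
      · exact hp0 w h
      · exact hp w h
    have hD_ne : (Cᶜ : Set V).Nonempty := by
      obtain ⟨a, ha⟩ := hA
      exact ⟨a, Set.disjoint_left.mp hAC ha⟩
    have hdisc : ¬ (G.induce (Cᶜ : Set V)).Connected := by
      intro hcon
      obtain ⟨a, ha⟩ := hA
      obtain ⟨b, hb⟩ := hB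
      have haD : a ∈ (Cᶜ : Set V) := Set.disjoint_left.mp hAC ha
      have hbD : b ∈ (Cᶜ : Set V) := Set.disjoint_left.mp hBC hb
      obtain ⟨q⟩ := hcon.preconnected ⟨a, haD⟩ ⟨b, hbD⟩
      obtain ⟨p, hp⟩ := walk_of_induce_walk q
      exact hBbar b hb (hclosed a (hA_sub ha) b p (fun w hw => hp w hw))
    have hi := hcsmp x Cᶜ hD_ne hdisc
    rw [iCondIndepFun_iff_iCondIndep] at hi
    have hmeq : MeasurableSpace.comap (restr Y ((Cᶜ)ᶜ : Set V)) MeasurableSpace.pi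
        = MeasurableSpace.comap (restr Y C) MeasurableSpace.pi :=
      congrArg (fun s : Set V => MeasurableSpace.comap (restr Y s) MeasurableSpace.pi)
        (compl_compl C)
    replace hi := iCondIndep_congr_cond hmeq _ ((measurable_restr hY C).comap_le) hi
    rw [condIndepFun_iff_condIndep]
    -- grouping of components
    set K : (G.induce (Cᶜ : Set V)).ConnectedComponent → Set V :=
      fun c => componentSet G (Cᶜ : Set V) c with hKdef
    set S : Set ((G.induce (Cᶜ : Set V)).ConnectedComponent) := {c | K c ⊆ Abar} with hSdef
    have hgrp : ProbabilityTheory.Kernel.Indep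
        (⨆ c ∈ S, MeasurableSpace.comap (restr Y (K c)) MeasurableSpace.pi)
        (⨆ c ∈ Sᶜ, MeasurableSpace.comap (restr Y (K c)) MeasurableSpace.pi)
        (condExpKernel ν (MeasurableSpace.comap (restr Y C) MeasurableSpace.pi))
        (ν.trim ((measurable_restr hY C).comap_le)) :=
      ProbabilityTheory.Kernel.indep_iSup_of_disjoint
        (fun c => (measurable_restr hY _).comap_le) hi disjoint_compl_right
    have hAle : MeasurableSpace.comap (restr Y A) MeasurableSpace.pi
        ≤ ⨆ c ∈ S, MeasurableSpace.comap (restr Y (K c)) MeasurableSpace.pi := by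
      rw [comap_restr_eq]
      refine iSup_le fun a => ?_
      have haAbar : (a : V) ∈ Abar := hA_sub a.2
      have haD : (a : V) ∈ (Cᶜ : Set V) := hAbar_D haAbar
      have hmem : (a : V) ∈ K ((G.induce (Cᶜ : Set V)).connectedComponentMk ⟨a, haD⟩) :=
        ⟨⟨a, haD⟩, rfl, rfl⟩
      have hc0S : (G.induce (Cᶜ : Set V)).connectedComponentMk ⟨a, haD⟩ ∈ S := by
        intro w hw
        obtain ⟨hw1, hw2⟩ := mem_componentSet_iff.mp hw
        obtain ⟨q⟩ := SimpleGraph.ConnectedComponent.exact hw2.symm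
        obtain ⟨p, hp⟩ := walk_of_induce_walk q
        exact hclosed a haAbar w p (fun z hz => hp z hz)
      exact le_trans (comap_single_le Y hmem) (le_biSup (fun c => MeasurableSpace.comap (restr Y (K c)) MeasurableSpace.pi) hc0S)
    have hBle : MeasurableSpace.comap (restr Y B) MeasurableSpace.pi
        ≤ ⨆ c ∈ Sᶜ, MeasurableSpace.comap (restr Y (K c)) MeasurableSpace.pi := by
      rw [comap_restr_eq]
      refine iSup_le fun b => ?_
      have hbD : (b : V) ∈ (Cᶜ : Set V) := Set.disjoint_left.mp hBC b.2
      have hmem : (b : V) ∈ K ((G.induce (Cᶜ : Set V)).connectedComponentMk ⟨b, hbD⟩) :=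
        ⟨⟨b, hbD⟩, rfl, rfl⟩
      have hc0S : (G.induce (Cᶜ : Set V)).connectedComponentMk ⟨b, hbD⟩ ∈ Sᶜ :=
        fun hsub => hBbar b b.2 (hsub hmem)
      exact le_trans (comap_single_le Y hmem) (le_biSup (fun c => MeasurableSpace.comap (restr Y (K c)) MeasurableSpace.pi) hc0S)
    exact ProbabilityTheory.Kernel.indep_of_indep_of_le_right
      (ProbabilityTheory.Kernel.indep_of_indep_of_le_left hgrp hAle) hBle
end

section
/- (Proposition 2) If μ satisfies the profile connected-set Markov property (U-CSMP) with respect to the profile undirected graph L, then for every x ∈ 𝒳 the conditional measure μ_x = μ(· | X = x) satisfies the global Markov property with respect to the induced simple graph U(x): for all pairwise disjoint A, B, C ⊆ V with A, B nonempty such that C separates A from B in U(x), the random vectors Y_A and Y_B are conditionally independent given Y_C under μ_x. -/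
open MeasureTheory ProbabilityTheory

section Aux

variable {Ω : Type*} {β β' : Type*} {m₁ m₂ : MeasurableSpace Ω}
  {mΩ : MeasurableSpace Ω} [StandardBorelSpace Ω]
  {h₁ : m₁ ≤ mΩ} {h₂ : m₂ ≤ mΩ} [MeasurableSpace β] [MeasurableSpace β']
  {μ : Measure Ω} [IsFiniteMeasure μ] {f : Ω → β} {g : Ω → β'}

lemma condIndepFun_congr_m (h : m₁ = m₂) (hCI : CondIndepFun m₁ h₁ f g μ) :
    CondIndepFun m₂ h₂ f g μ := by subst h; exact hCI

lemma comap_restr_congr {V : Type*} {E : V → Type*}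
    [∀ a, MeasurableSpace (E a)] (Y : ∀ a, Ω → E a) {S T : Set V} (h : S = T) :
    MeasurableSpace.comap (restr Y S) MeasurableSpace.pi
      = MeasurableSpace.comap (restr Y T) MeasurableSpace.pi := by
  subst h; rfl

/-- A walk in the induced subgraph on `D` maps to a walk in `G` whose support lies in `D`. -/
lemma exists_walk_of_induce {V : Type*} {G : SimpleGraph V} {D : Set V}
    {u v : ↥D} (hr : (G.induce D).Reachable u v) :
    ∃ p : G.Walk u.1 v.1, ∀ w ∈ p.support, w ∈ D := by
  obtain ⟨q⟩ := hr
  refine ⟨q.map (SimpleGraph.Embedding.induce D).toHom, ?_⟩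
  intro w hw
  replace hw : w ∈ (q.map (SimpleGraph.Embedding.induce D).toHom).support := hw
  rw [SimpleGraph.Walk.support_map, List.mem_map] at hw
  obtain ⟨z, _, rfl⟩ := hw
  exact z.2

end Aux

/-- **Proposition 2.** If `μ` satisfies the profile connected-set Markov
property (U-CSMP) with respect to the profile undirected graph `L`, then for every `x ∈ 𝒳`
the conditional measure `μ_x = μ(·|X = x)` satisfies the global Markov property with respect
to the induced graph `U(x)`. -/
theorem UCSMP_implies_profile_GMP
    {Ω : Type*} [MeasurableSpace Ω] [StandardBorelSpace Ω] [Nonempty Ω]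
    {V : Type*} [Fintype V]
    {𝒳 : Type*} [Fintype 𝒳] [Nonempty 𝒳] [MeasurableSpace 𝒳] [MeasurableSingletonClass 𝒳]
    {E : V → Type*} [∀ a, MeasurableSpace (E a)] [∀ a, StandardBorelSpace (E a)]
    (Y : ∀ a, Ω → E a) (hY : ∀ a, Measurable (Y a))
    (X : Ω → 𝒳) (hX : Measurable X)
    (μ : Measure Ω) [IsProbabilityMeasure μ] (hXpos : ∀ x : 𝒳, μ (X ⁻¹' {x}) ≠ 0)
    (L : V → V → Set 𝒳) (hL : ∀ a b, L a b = L b a)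
    (h : UCSMP Y hY X μ L hL) :
    ∀ (x : 𝒳) (A B C : Set V), A.Nonempty → B.Nonempty →
      Disjoint A B → Disjoint A C → Disjoint B C →
      Separates (inducedGraph L hL x) A B C →
      CondIndepFun (MeasurableSpace.comap (restr Y C) MeasurableSpace.pi)
        ((measurable_restr hY C).comap_le) (restr Y A) (restr Y B) (μ[|X ⁻¹' {x}]) := by
  intro x A B C hA hB hAB hAC hBC hsep
  classical
  set G := inducedGraph L hL x with hG
  have hAD : A ⊆ Cᶜ := fun v hv => Set.disjoint_left.mp hAC hv
  have hBD : B ⊆ Cᶜ := fun v hv => Set.disjoint_left.mp hBC hv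
  obtain ⟨a0, ha0⟩ := hA
  obtain ⟨b0, hb0⟩ := hB
  -- no vertex reachable (within `Cᶜ`) from `B` can be reached from `A` avoiding `C`
  have key : ∀ b (hb : b ∈ B), ∀ v : ↥(Cᶜ : Set V),
      (G.induce (Cᶜ : Set V)).Reachable v ⟨b, hBD hb⟩ →
      ¬ (∃ a ∈ A, ∃ p : G.Walk a v.1, ∀ u ∈ p.support, u ∉ C) := by
    rintro b hb v hr ⟨a, ha, p, hp⟩
    obtain ⟨q, hq⟩ := exists_walk_of_induce hr
    obtain ⟨c, hc, hcC⟩ := hsep a ha b hb (p.append q)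
    rw [SimpleGraph.Walk.mem_support_append_iff] at hc
    rcases hc with hc | hc
    · exact hp c hc hcC
    · exact hq c hc hcC
  have hDne : (Cᶜ : Set V).Nonempty := ⟨a0, hAD ha0⟩
  have hNC : ¬ (G.induce (Cᶜ : Set V)).Connected := by
    intro hcon
    exact key b0 hb0 ⟨a0, hAD ha0⟩
      (hcon.preconnected ⟨a0, hAD ha0⟩ ⟨b0, hBD hb0⟩)
      ⟨a0, ha0, SimpleGraph.Walk.nil, by
        intro u hu
        simp only [SimpleGraph.Walk.support_nil, List.mem_singleton] at hu
        subst hu; exact hAD ha0⟩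
  have hi := h x (Cᶜ : Set V) hDne hNC
  haveI : Fintype ↥(Cᶜ : Set V) := Fintype.ofFinite _
  haveI : Fintype ((G.induce (Cᶜ : Set V)).ConnectedComponent) := Fintype.ofFinite _
  set κ := (G.induce (Cᶜ : Set V)).ConnectedComponent with hκ
  set P : κ → Prop := fun c => ∃ v, v ∈ componentSet G (Cᶜ : Set V) c ∧
      ∃ a ∈ A, ∃ p : G.Walk a v, ∀ u ∈ p.support, u ∉ C with hP
  set S : Finset κ := Finset.univ.filter P with hS
  set T : Finset κ := Finset.univ.filter (fun c => ¬ P c) with hT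
  have hST : Disjoint S T := by
    rw [Finset.disjoint_left]
    intro c hcS hcT
    rw [hS, Finset.mem_filter] at hcS
    rw [hT, Finset.mem_filter] at hcT
    exact hcT.2 hcS.2
  have hCI := hi.condIndepFun_finset S T hST
    (fun c => measurable_restr hY (componentSet G (Cᶜ : Set V) c))
  -- components of vertices of A lie in S
  have hmemA : ∀ a : ↥A, a.1 ∈ componentSet G (Cᶜ : Set V)
      ((G.induce (Cᶜ : Set V)).connectedComponentMk ⟨a.1, hAD a.2⟩) :=
    fun a => ⟨⟨a.1, hAD a.2⟩, rfl, rfl⟩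
  have hSA : ∀ a : ↥A,
      ((G.induce (Cᶜ : Set V)).connectedComponentMk ⟨a.1, hAD a.2⟩) ∈ S := by
    intro a
    rw [hS, Finset.mem_filter]
    refine ⟨Finset.mem_univ _, ⟨a.1, hmemA a, a.1, a.2, SimpleGraph.Walk.nil, ?_⟩⟩
    intro u hu
    simp only [SimpleGraph.Walk.support_nil, List.mem_singleton] at hu
    subst hu; exact hAD a.2
  have hmemB : ∀ b : ↥B, b.1 ∈ componentSet G (Cᶜ : Set V)
      ((G.induce (Cᶜ : Set V)).connectedComponentMk ⟨b.1, hBD b.2⟩) :=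
    fun b => ⟨⟨b.1, hBD b.2⟩, rfl, rfl⟩
  have hTB : ∀ b : ↥B,
      ((G.induce (Cᶜ : Set V)).connectedComponentMk ⟨b.1, hBD b.2⟩) ∈ T := by
    intro b
    rw [hT, Finset.mem_filter]
    refine ⟨Finset.mem_univ _, ?_⟩
    rintro ⟨v, hv, a, ha, p, hp⟩
    obtain ⟨w, hw, rfl⟩ := hv
    exact key b.1 b.2 w (SimpleGraph.ConnectedComponent.exact hw) ⟨a, ha, p, hp⟩
  -- project the tuples to `restr Y A` and `restr Y B`
  let gA : (∀ c : ↥S, ∀ v : ↥(componentSet G (Cᶜ : Set V) c.1), E v.1) → ∀ a : ↥A, E a.1 :=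
    fun f a => f ⟨_, hSA a⟩ ⟨a.1, hmemA a⟩
  let gB : (∀ c : ↥T, ∀ v : ↥(componentSet G (Cᶜ : Set V) c.1), E v.1) → ∀ b : ↥B, E b.1 :=
    fun f b => f ⟨_, hTB b⟩ ⟨b.1, hmemB b⟩
  have hgA : Measurable gA := measurable_pi_lambda _ fun a =>
    (measurable_pi_apply _).comp (measurable_pi_apply _)
  have hgB : Measurable gB := measurable_pi_lambda _ fun b =>
    (measurable_pi_apply _).comp (measurable_pi_apply _)
  have hfinal := hCI.comp hgA hgB
  exact condIndepFun_congr_m (comap_restr_congr Y (compl_compl C)) hfinal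
end
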